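/- Let P be a symmetric positive definite n×n matrix with μI ⪯ P ⪯ νI for 0 < μ ≤ ν, and let M be an n×n matrix such that P ⪰ MᵀPM + μI. Set κ̄ = √(ν/μ) and L = P^{1/2} M P^{-1/2}. Then ‖L‖ ≤ √(1 - 1/κ̄²) ≤ 1 - 1/(2κ̄²), and ‖P^{1/2}‖·‖P^{-1/2}‖ ≤ κ̄. -/

import Mathlib

open Matrix
open scoped Matrix.Norms.L2Operator

open scoped ComplexOrder in
/-- The positive semidefinite square root of a positive semidefinite matrix
(the definition removed from Mathlib, restated with its old value). -/
noncomputable def Matrix.PosSemidef.sqrt {n : Type*} [Fintype n] [DecidableEq n] {𝕜 : Type*}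
    [RCLike 𝕜] {A : Matrix n n 𝕜} (hA : A.PosSemidef) : Matrix n n 𝕜 :=
  (hA.1.eigenvectorUnitary : Matrix n n 𝕜) * diagonal (((↑) : ℝ → 𝕜) ∘ (√·) ∘ hA.1.eigenvalues) *
    (star hA.1.eigenvectorUnitary : Matrix n n 𝕜)

lemma aux_sqrt_posSemidef {n : ℕ} {A : Matrix (Fin n) (Fin n) ℝ} (hA : A.PosSemidef) :
    hA.sqrt.PosSemidef := by
  have hD : (diagonal ((RCLike.ofReal : ℝ → ℝ) ∘ (√·) ∘ hA.1.eigenvalues)).PosSemidef :=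
    PosSemidef.diagonal (fun i => by simp [Real.sqrt_nonneg])
  have := hD.conjTranspose_mul_mul_same (star hA.1.eigenvectorUnitary : Matrix (Fin n) (Fin n) ℝ)
  unfold Matrix.PosSemidef.sqrt
  convert this using 3
  rw [star_eq_conjTranspose, conjTranspose_conjTranspose]

lemma aux_sqrt_mul_self {n : ℕ} {A : Matrix (Fin n) (Fin n) ℝ} (hA : A.PosSemidef) :
    hA.sqrt * hA.sqrt = A := by
  have hU := Unitary.coe_star_mul_self hA.1.eigenvectorUnitary
  conv_rhs => rw [hA.1.spectral_theorem, Unitary.conjStarAlgAut_apply]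
  simp only [Matrix.PosSemidef.sqrt]
  rw [show ∀ (U D V : Matrix (Fin n) (Fin n) ℝ), U * D * V * (U * D * V) = U * (D * (V * U) * D) * V
    by intro U D V; noncomm_ring, hU, Matrix.mul_one, diagonal_mul_diagonal]
  refine congrArg (fun D => (hA.1.eigenvectorUnitary : Matrix (Fin n) (Fin n) ℝ) * D *
    (star hA.1.eigenvectorUnitary : Matrix (Fin n) (Fin n) ℝ)) ?_
  congr 1
  funext i
  simp [Real.mul_self_sqrt (hA.eigenvalues_nonneg i)]

lemma aux_psd_smul {n : ℕ} {A : Matrix (Fin n) (Fin n) ℝ} (hA : A.PosSemidef) {r : ℝ}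
    (hr : 0 ≤ r) : (r • A).PosSemidef := by
  exact hA.smul hr

lemma aux_norm_le {n : ℕ} (B : Matrix (Fin n) (Fin n) ℝ) (c : ℝ) (hc : 0 ≤ c)
    (h : ((c • (1 : Matrix (Fin n) (Fin n) ℝ)) - Bᵀ * B).PosSemidef) :
    ‖B‖ ≤ Real.sqrt c := by
  rw [l2_opNorm_def]
  apply ContinuousLinearMap.opNorm_le_bound _ (Real.sqrt_nonneg c)
  intro x
  have key : (B *ᵥ x) ⬝ᵥ (B *ᵥ x) ≤ c * (x ⬝ᵥ x) := by
    have h2 := h.dotProduct_mulVec_nonneg x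
    simp only [Matrix.sub_mulVec, Matrix.smul_mulVec, Matrix.one_mulVec,
      dotProduct_sub, dotProduct_smul, RCLike.re_to_real, smul_eq_mul, star_trivial] at h2
    have : x ⬝ᵥ (Bᵀ * B) *ᵥ x = (B *ᵥ x) ⬝ᵥ (B *ᵥ x) := by
      rw [← Matrix.mulVec_mulVec, Matrix.dotProduct_mulVec, Matrix.vecMul_transpose]
    linarith
  have hnx : ∀ y : EuclideanSpace ℝ (Fin n), ‖y‖ ^ 2 = y ⬝ᵥ y := by
    intro y
    rw [EuclideanSpace.norm_eq, Real.sq_sqrt (by positivity)]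
    simp [dotProduct, Real.norm_eq_abs, sq_abs, sq]
  have happ : ‖((toEuclideanLin (𝕜 := ℝ) (m := Fin n) (n := Fin n)).trans
      LinearMap.toContinuousLinearMap B) x‖ ^ 2 = (B *ᵥ x) ⬝ᵥ (B *ᵥ x) := by
    rw [LinearEquiv.trans_apply]
    have : (LinearMap.toContinuousLinearMap (toEuclideanLin B)) x = toEuclideanLin B x := rfl
    rw [this, Matrix.toEuclideanLin_apply]
    exact hnx _
  have h1 : ‖((toEuclideanLin (𝕜 := ℝ) (m := Fin n) (n := Fin n)).trans
      LinearMap.toContinuousLinearMap B) x‖ ^ 2 ≤ (Real.sqrt c * ‖x‖) ^ 2 := by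
    rw [happ, mul_pow, Real.sq_sqrt hc, hnx]
    exact key
  calc ‖((toEuclideanLin (𝕜 := ℝ) (m := Fin n) (n := Fin n)).trans
      LinearMap.toContinuousLinearMap B) x‖
      = √(‖((toEuclideanLin (𝕜 := ℝ) (m := Fin n) (n := Fin n)).trans
      LinearMap.toContinuousLinearMap B) x‖ ^ 2) := (Real.sqrt_sq (norm_nonneg _)).symm
    _ ≤ √((Real.sqrt c * ‖x‖) ^ 2) := Real.sqrt_le_sqrt h1
    _ = Real.sqrt c * ‖x‖ := Real.sqrt_sq (by positivity)

theorem strong_stability_from_lyapunov {n : ℕ}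
    (P M : Matrix (Fin n) (Fin n) ℝ) (μ ν : ℝ)
    (hμ : 0 < μ) (hμν : μ ≤ ν) (hP : P.PosDef)
    (hlow : (P - μ • (1 : Matrix (Fin n) (Fin n) ℝ)).PosSemidef)
    (hhigh : ((ν • (1 : Matrix (Fin n) (Fin n) ℝ)) - P).PosSemidef)
    (hlyap : (P - (Mᵀ * P * M + μ • (1 : Matrix (Fin n) (Fin n) ℝ))).PosSemidef) :
    ‖hP.posSemidef.sqrt * M * (hP.posSemidef.sqrt)⁻¹‖ ≤ Real.sqrt (1 - 1 / Real.sqrt (ν / μ) ^ 2) ∧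
    Real.sqrt (1 - 1 / Real.sqrt (ν / μ) ^ 2) ≤ 1 - 1 / (2 * Real.sqrt (ν / μ) ^ 2) ∧
    ‖hP.posSemidef.sqrt‖ * ‖(hP.posSemidef.sqrt)⁻¹‖ ≤ Real.sqrt (ν / μ) := by
  have hν : 0 < ν := lt_of_lt_of_le hμ hμν
  set S := hP.posSemidef.sqrt with hSdef
  have hSsd : S.PosSemidef := aux_sqrt_posSemidef hP.posSemidef
  have hSH : Sᵀ = S := by rw [← conjTranspose_eq_transpose_of_trivial]; exact hSsd.1
  have hSS : S * S = P := aux_sqrt_mul_self hP.posSemidef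
  have hdet : IsUnit S.det := by
    have h2 : S.det * S.det = P.det := by rw [← det_mul, hSS]
    have : S.det ≠ 0 := by
      intro h0
      rw [h0, mul_zero] at h2
      exact hP.det_pos.ne' h2.symm
    exact this.isUnit
  set Q := S⁻¹ with hQdef
  have hSQ : S * Q = 1 := mul_nonsing_inv _ hdet
  have hQS : Q * S = 1 := nonsing_inv_mul _ hdet
  have hQH : Qᵀ = Q := by rw [hQdef, transpose_nonsing_inv, hSH]
  have hQPQ : Q * P * Q = 1 := by
    rw [← hSS, show Q * (S * S) * Q = (Q * S) * (S * Q) by noncomm_ring, hQS, hSQ, one_mul]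
  -- conjugation lemma for real matrices
  have conj : ∀ (X : Matrix (Fin n) (Fin n) ℝ), X.PosSemidef → (Q * X * Q).PosSemidef := by
    intro X hX
    have := hX.conjTranspose_mul_mul_same Q
    simpa [conjTranspose_eq_transpose_of_trivial, hQH] using this
  set L := S * M * Q with hLdef
  have hLtL : Lᵀ * L = Q * (Mᵀ * P * M) * Q := by
    rw [hLdef, transpose_mul, transpose_mul, hQH, hSH]
    rw [show Q * (Mᵀ * S) * (S * M * Q) = Q * (Mᵀ * (S * S) * M) * Q by noncomm_ring, hSS]
  have hQQ1 : Q * (Mᵀ * P * M) * Q = Q * ((Mᵀ * P * M + μ • 1)) * Q - μ • (Q * Q) := by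
    rw [mul_add, add_mul]
    simp [Matrix.mul_smul, Matrix.smul_mul]
  -- E1
  have E1 : Q * (P - (Mᵀ * P * M + μ • 1)) * Q = 1 - Lᵀ * L - μ • (Q * Q) := by
    rw [Matrix.mul_sub, Matrix.sub_mul, hQPQ, hLtL, hQQ1]
    abel
  have E2 : Q * ((ν • (1 : Matrix (Fin n) (Fin n) ℝ)) - P) * Q = ν • (Q * Q) - 1 := by
    rw [Matrix.mul_sub, Matrix.sub_mul, hQPQ]
    simp [Matrix.mul_smul, Matrix.smul_mul, mul_assoc, hQS]
  have hratio : (0:ℝ) ≤ μ / ν := by positivity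
  have hsum : ((1 - μ/ν) • (1 : Matrix (Fin n) (Fin n) ℝ) - Lᵀ * L)
      = (Q * (P - (Mᵀ * P * M + μ • 1)) * Q) + (μ/ν) • (Q * ((ν • (1 : Matrix (Fin n) (Fin n) ℝ)) - P) * Q) := by
    rw [E1, E2, smul_sub, smul_smul, div_mul_cancel₀ _ hν.ne']
    module
  have hcnn : (0:ℝ) ≤ 1 - μ/ν := by
    have : μ / ν ≤ 1 := (div_le_one hν).mpr hμν
    linarith
  have hLnorm : ‖L‖ ≤ Real.sqrt (1 - μ/ν) := by
    apply aux_norm_le _ _ hcnn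
    rw [hsum]
    exact (conj _ hlyap).add (aux_psd_smul (conj _ hhigh) hratio)
  have hsq : Real.sqrt (ν / μ) ^ 2 = ν / μ := Real.sq_sqrt (by positivity)
  have hinv : 1 / (ν / μ) = μ / ν := one_div_div ν μ
  refine ⟨?_, ?_, ?_⟩
  · rw [hsq, hinv]
    exact hLnorm
  · rw [hsq, hinv]
    have h2 : 1 / (2 * (ν/μ)) = (μ/ν) / 2 := by
      rw [div_eq_div_iff (by positivity : (0:ℝ) < 2*(ν/μ)).ne' (by norm_num : (2:ℝ) ≠ 0)]
      field_simp
    rw [h2, Real.sqrt_le_iff]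
    have hx : μ/ν ≤ 1 := (div_le_one hν).mpr hμν
    have hx0 : (0:ℝ) ≤ μ/ν := by positivity
    constructor
    · linarith
    · nlinarith [sq_nonneg (μ/ν)]
  · have hSnorm : ‖S‖ ≤ Real.sqrt ν := by
      apply aux_norm_le _ _ hν.le
      rw [hSH, hSS]
      exact hhigh
    have hQnorm : ‖Q‖ ≤ Real.sqrt (1/μ) := by
      apply aux_norm_le _ _ (by positivity)
      have e3 : Q * (P - μ • (1 : Matrix (Fin n) (Fin n) ℝ)) * Q = 1 - μ • (Q * Q) := by
        rw [Matrix.mul_sub, Matrix.sub_mul, hQPQ]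
        simp [Matrix.mul_smul, Matrix.smul_mul, mul_assoc, hQS]
      have := aux_psd_smul (conj _ hlow) (le_of_lt (by positivity : (0:ℝ) < 1/μ))
      rw [e3, smul_sub, smul_smul, one_div, inv_mul_cancel₀ hμ.ne', one_smul] at this
      rw [hQH, one_div]
      exact this
    calc ‖S‖ * ‖Q‖ ≤ Real.sqrt ν * Real.sqrt (1/μ) :=
          mul_le_mul hSnorm hQnorm (norm_nonneg _) (Real.sqrt_nonneg _)
      _ = Real.sqrt (ν * (1/μ)) := (Real.sqrt_mul hν.le _).symm
      _ = Real.sqrt (ν / μ) := by rw [mul_one_div]
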